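/- With X = {1,…,r} and K = {r+1,…,r+k}, two 3-nilpotent semigroups N(X,K,m) and N(X,K,m′) are isomorphic if and only if there is a permutation π of X such that the induced partial partition P_m of X × X is mapped to P_{m′} by the action (x,y) ↦ (xπ, yπ). Equivalently, isomorphism classes of 3-nilpotent semigroups of rank r with |K| = k correspond bijectively to orbits of the symmetric group S_r acting on the set of partial partitions of X × X into k blocks. -/

import Mathlib

/-- The multiplication of `N(X, K, m)` on `Option (X ⊕ K)`, `none` being `0`. -/
def nmul {X K : Type*} (m : X → X → Option K) :
    Option (X ⊕ K) → Option (X ⊕ K) → Option (X ⊕ K)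
  | some (Sum.inl x), some (Sum.inl y) => (m x y).map Sum.inr
  | _, _ => none

theorem nmul_none_left {X K : Type*} (m : X → X → Option K) (b) :
    nmul m none b = none := rfl

theorem nmul_cases {X K : Type*} (m : X → X → Option K) (a b) :
    nmul m a b = none ∨ ∃ j, nmul m a b = some (Sum.inr j) := by
  rcases a with _ | (x | j) <;> rcases b with _ | (y | j') <;>
    try (left; rfl)
  rcases h : m x y with _ | j
  · left; simp [nmul, h]
  · right; exact ⟨j, by simp [nmul, h]⟩

/-- `N(X,K,m) ≅ N(X,K,m')` iff some permutation `π` of `X` carries the kernel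
partial partition of `m` to that of `m'` under the coordinatewise action;
equivalently, there are permutations `π` of `X` and `σ` of the labels `K`
with `m'(xπ, yπ) = (m(x,y))σ`. -/
theorem stmt4 (r k : ℕ) (m m' : Fin r → Fin r → Option (Fin k))
    (hm : ∀ j : Fin k, ∃ x y, m x y = some j)
    (hm' : ∀ j : Fin k, ∃ x y, m' x y = some j) :
    (∃ e : Option (Fin r ⊕ Fin k) ≃ Option (Fin r ⊕ Fin k),
        ∀ a b, e (nmul m a b) = nmul m' (e a) (e b)) ↔
      ∃ π : Equiv.Perm (Fin r), ∃ σ : Equiv.Perm (Fin k),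
        ∀ x y, m' (π x) (π y) = (m x y).map σ := by
  constructor
  · rintro ⟨e, he⟩
    -- the isomorphism fixes zero
    have h0 : e none = none := by
      have h := he none none
      rw [show nmul m none none = none from rfl] at h
      rcases hx : e none with _ | (x | j)
      · rfl
      · rw [hx] at h
        rcases nmul_cases m' (some (Sum.inl x)) (some (Sum.inl x)) with h' | ⟨j, h'⟩ <;>
          rw [h'] at h <;> simp at h
      · rw [hx, show nmul m' (some (Sum.inr j)) (some (Sum.inr j)) = none from rfl] at h
        simp at h
    -- the isomorphism sends labels to labels
    have hinr : ∀ j : Fin k, ∃ j', e (some (Sum.inr j)) = some (Sum.inr j') := by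
      intro j
      obtain ⟨x, y, hxy⟩ := hm j
      have h := he (some (Sum.inl x)) (some (Sum.inl y))
      rw [show nmul m (some (Sum.inl x)) (some (Sum.inl y)) = (m x y).map Sum.inr from rfl,
        hxy] at h
      rcases nmul_cases m' (e (some (Sum.inl x))) (e (some (Sum.inl y))) with h' | ⟨j', h'⟩ <;>
        rw [h'] at h
      · exact absurd (e.injective (h.trans h0.symm)) (by simp)
      · exact ⟨j', by simpa using h⟩
    choose f hf using hinr
    have finj : Function.Injective f := by
      intro a b hab
      have : e (some (Sum.inr a)) = e (some (Sum.inr b)) := by rw [hf, hf, hab]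
      simpa using e.injective this
    have fsurj : Function.Surjective f := Finite.injective_iff_surjective.mp finj
    -- the isomorphism sends generators to generators
    have hinl : ∀ x : Fin r, ∃ x', e (some (Sum.inl x)) = some (Sum.inl x') := by
      intro x
      rcases hx : e (some (Sum.inl x)) with _ | (x' | j')
      · exact absurd (e.injective (hx.trans h0.symm)) (by simp)
      · exact ⟨x', rfl⟩
      · obtain ⟨j, hj⟩ := fsurj j'
        have : e (some (Sum.inr j)) = e (some (Sum.inl x)) := by rw [hf, hj, hx]
        exact absurd (e.injective this) (by simp)
    choose g hg using hinl
    have ginj : Function.Injective g := by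
      intro a b hab
      have : e (some (Sum.inl a)) = e (some (Sum.inl b)) := by rw [hg, hg, hab]
      simpa using e.injective this
    refine ⟨Equiv.ofBijective g ⟨ginj, Finite.injective_iff_surjective.mp ginj⟩,
      Equiv.ofBijective f ⟨finj, fsurj⟩, ?_⟩
    intro x y
    have h := he (some (Sum.inl x)) (some (Sum.inl y))
    rw [show nmul m (some (Sum.inl x)) (some (Sum.inl y)) = (m x y).map Sum.inr from rfl,
      hg, hg,
      show nmul m' (some (Sum.inl (g x))) (some (Sum.inl (g y)))
        = (m' (g x) (g y)).map Sum.inr from rfl] at h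
    show m' (g x) (g y) = (m x y).map f
    rcases hc : m x y with _ | j
    · rw [hc] at h
      simp only [Option.map_none] at h
      rw [h0] at h
      rcases hd : m' (g x) (g y) with _ | j'
      · simp
      · rw [hd] at h; simp at h
    · rw [hc] at h
      simp only [Option.map_some] at h
      rw [hf] at h
      rcases hd : m' (g x) (g y) with _ | j'
      · rw [hd] at h; simp at h
      · rw [hd] at h
        simp only [Option.map_some, Option.some.injEq, Sum.inr.injEq] at h
        simp [hd, h]
  · rintro ⟨π, σ, h⟩
    refine ⟨Equiv.optionCongr (Equiv.sumCongr π σ), ?_⟩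
    intro a b
    rcases a with _ | (x | j) <;> rcases b with _ | (y | j') <;>
      try rfl
    show Equiv.optionCongr (Equiv.sumCongr π σ) ((m x y).map Sum.inr)
      = nmul m' (some (Sum.inl (π x))) (some (Sum.inl (π y)))
    rw [show nmul m' (some (Sum.inl (π x))) (some (Sum.inl (π y)))
      = (m' (π x) (π y)).map Sum.inr from rfl, h]
    rcases m x y with _ | j <;> rfl
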